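/- Let R be an associative ring, G a groupoid, and α = (D_g, α_g)_{g∈G} a partial action of G on R such that D_g is s-unital for every g ∈ G and R = ⊕_{e∈G₀} D_e. Then the map Ψ, sending a G-invariant ideal J of R to J ⋊_{α^J} G, is a bijection from the set of G-invariant ideals of R onto the set of G-graded ideals of R ⋊_α G, with inverse given by I ↦ P₀(I). In particular, there is a one-to-one correspondence between G-graded ideals of R ⋊_α G and G-invariant ideals of R. -/

import Mathlib

open scoped Classical

/-- A (discrete) groupoid, presented as its set of morphisms `G`, with source map `s`,
range map `r`, inversion `inv` and a partially defined multiplication `mul`.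
The units (identity morphisms, i.e. the objects) are the elements `e` with `r e = e`. -/
structure DGroupoid (G : Type*) where
  s : G → G
  r : G → G
  inv : G → G
  mul : (g h : G) → s g = r h → G
  s_inv : ∀ g, s (inv g) = r g
  r_inv : ∀ g, r (inv g) = s g
  inv_inv : ∀ g, inv (inv g) = g
  r_mul : ∀ g h (p : s g = r h), r (mul g h p) = r g
  s_mul : ∀ g h (p : s g = r h), s (mul g h p) = s h
  r_idem : ∀ g, r (r g) = r g
  s_of_r : ∀ g, s (r g) = r g
  r_of_s : ∀ g, r (s g) = s g
  s_idem : ∀ g, s (s g) = s g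
  assoc : ∀ g h k (p : s g = r h) (q : s h = r k) (pq : s (mul g h p) = r k)
      (qp : s g = r (mul h k q)), mul (mul g h p) k pq = mul g (mul h k q) qp
  id_mul : ∀ g (p : s (r g) = r g), mul (r g) g p = g
  mul_id : ∀ g (p : s g = r (s g)), mul g (s g) p = g
  mul_inv : ∀ g (p : s g = r (inv g)), mul g (inv g) p = r g
  inv_mul : ∀ g (p : s (inv g) = r g), mul (inv g) g p = s g

namespace DGroupoid

/-- `e` is a unit (an object, identified with its identity morphism) of the groupoid. -/
def unit {G : Type*} (𝔾 : DGroupoid G) (e : G) : Prop := 𝔾.r e = e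

end DGroupoid

section RingDefs

variable {R : Type*} [NonUnitalRing R]

/-- A subset of a (possibly non-unital) ring is a two-sided ideal. -/
def IsRingIdeal (J : Set R) : Prop :=
  (0 : R) ∈ J ∧ (∀ x ∈ J, ∀ y ∈ J, x + y ∈ J) ∧ (∀ x ∈ J, -x ∈ J) ∧
    ∀ x ∈ J, ∀ y : R, x * y ∈ J ∧ y * x ∈ J

/-- A subset of a ring, viewed as a ring, is s-unital: every `x` in it lies in
`xT ∩ Tx`. -/
def IsSUnitalSet (J : Set R) : Prop :=
  ∀ x ∈ J, (∃ u ∈ J, x * u = x) ∧ (∃ v ∈ J, v * x = x)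

end RingDefs

/-- A partial action `α = (D_g, α_g)_{g ∈ G}` of a groupoid `𝔾` on a
(possibly non-unital, associative) ring `R`:  each `D_{r g}` is a two-sided ideal of `R`,
each `D_g` is a two-sided ideal of `D_{r g}`, and `α_g = act g` restricts to a ring
isomorphism `D_{g⁻¹} → D_g` (the function `act g` is arbitrary outside `D_{g⁻¹}`),
satisfying the axioms of a partial action. -/
structure PartialAction {G : Type*} (𝔾 : DGroupoid G) (R : Type*) [NonUnitalRing R] where
  D : G → Set R
  zero_mem : ∀ g, (0 : R) ∈ D g
  add_mem : ∀ g, ∀ x ∈ D g, ∀ y ∈ D g, x + y ∈ D g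
  neg_mem : ∀ g, ∀ x ∈ D g, -x ∈ D g
  subset_r : ∀ g, D g ⊆ D (𝔾.r g)
  idealR : ∀ g, IsRingIdeal (D (𝔾.r g))
  idealInR : ∀ g, ∀ x ∈ D g, ∀ y ∈ D (𝔾.r g), x * y ∈ D g ∧ y * x ∈ D g
  act : G → R → R
  act_mem : ∀ g, ∀ x ∈ D (𝔾.inv g), act g x ∈ D g
  act_add : ∀ g, ∀ x ∈ D (𝔾.inv g), ∀ y ∈ D (𝔾.inv g), act g (x + y) = act g x + act g y
  act_mul : ∀ g, ∀ x ∈ D (𝔾.inv g), ∀ y ∈ D (𝔾.inv g), act g (x * y) = act g x * act g y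
  act_inv : ∀ g, ∀ x ∈ D (𝔾.inv g), act (𝔾.inv g) (act g x) = x
  act_unit : ∀ e, 𝔾.unit e → ∀ x ∈ D e, act e x = x
  act_comp_mem : ∀ g h (p : 𝔾.s g = 𝔾.r h), ∀ x, x ∈ D (𝔾.inv g) → x ∈ D h →
      act (𝔾.inv h) x ∈ D (𝔾.inv (𝔾.mul g h p))
  act_comp : ∀ g h (p : 𝔾.s g = 𝔾.r h), ∀ x ∈ D (𝔾.inv h), act h x ∈ D (𝔾.inv g) →
      act g (act h x) = act (𝔾.mul g h p) x

namespace PartialAction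

variable {G : Type*} {R : Type*} [NonUnitalRing R] {𝔾 : DGroupoid G} (P : PartialAction 𝔾 R)

/-- `R = ⊕_{e ∈ G₀} D_e`: every element of `R` decomposes as a finite sum of elements
of the `D_e` (`e` a unit), and the decomposition is unique (a finite sum of elements of
the distinct `D_e`'s which vanishes has all terms zero). -/
def directSum : Prop :=
  (∀ x : R, ∃ f : G →₀ R, (∀ g ∈ f.support, 𝔾.unit g) ∧ (∀ g, f g ∈ P.D g) ∧
      (f.sum fun _ v => v) = x) ∧
    ∀ f : G →₀ R, (∀ g ∈ f.support, 𝔾.unit g) → (∀ g, f g ∈ P.D g) →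
      (f.sum fun _ v => v) = 0 → f = 0

/-- The carrier of the partial skew groupoid ring `R ⋊_α G`: finitely supported
functions `a : G →₀ R` (thought of as `Σ_g a_g δ_g`) with `a g ∈ D g`. -/
def carrier : Set (G →₀ R) := {a | ∀ g, a g ∈ P.D g}

/-- The multiplication of the partial skew groupoid ring:
`(a_g δ_g)(b_h δ_h) = α_g(α_{g⁻¹}(a_g) b_h) δ_{gh}` when `(g,h)` is composable,
and `0` otherwise. -/
noncomputable def skewMul (a b : G →₀ R) : G →₀ R :=
  a.support.sum fun g => b.support.sum fun h =>
    if p : 𝔾.s g = 𝔾.r h then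
      Finsupp.single (𝔾.mul g h p) (P.act g (P.act (𝔾.inv g) (a g) * b h))
    else 0

/-- The subset `⊕_{e ∈ G₀} D_e δ_e` of `R ⋊_α G`: elements supported on units. -/
def diag : Set (G →₀ R) := {a | (∀ g, a g ∈ P.D g) ∧ ∀ g ∈ a.support, 𝔾.unit g}

/-- `I` is a two-sided ideal of the partial skew groupoid ring `R ⋊_α G`. -/
def IsSkewIdeal (I : Set (G →₀ R)) : Prop :=
  I ⊆ P.carrier ∧ (0 : G →₀ R) ∈ I ∧ (∀ x ∈ I, ∀ y ∈ I, x + y ∈ I) ∧ (∀ x ∈ I, -x ∈ I) ∧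
    ∀ x ∈ I, ∀ y ∈ P.carrier, P.skewMul x y ∈ I ∧ P.skewMul y x ∈ I

/-- The projection `P₀ : R ⋊_α G → R`, `Σ_g a_g δ_g ↦ Σ_{e ∈ G₀} a_e`. -/
noncomputable def P0 (_P : PartialAction 𝔾 R) (a : G →₀ R) : R :=
  a.sum fun g v => if 𝔾.unit g then v else 0

/-- An ideal `I` of `R ⋊_α G` is `G`-graded if it is generated by its homogeneous
components, i.e. `I = ⊕_g (I ∩ D_g δ_g)`. -/
def IsGradedIdeal (I : Set (G →₀ R)) : Prop :=
  P.IsSkewIdeal I ∧ ∀ a ∈ I, ∀ g : G, Finsupp.single g (a g) ∈ I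

/-- `J` is a `G`-invariant (two-sided) ideal of `R`: `α_g(D_{g⁻¹} ∩ J) ⊆ J`. -/
def IsInvIdeal (J : Set R) : Prop :=
  IsRingIdeal J ∧ ∀ g, ∀ x ∈ P.D (𝔾.inv g) ∩ J, P.act g x ∈ J

/-- The subset `J ⋊_{α^J} G = ⊕_g (J ∩ D_g) δ_g` of `R ⋊_α G` attached to a
`G`-invariant ideal `J` of `R`. -/
def skewOf (J : Set R) : Set (G →₀ R) := {a | ∀ g, a g ∈ P.D g ∩ J}

/-- `⊕_{e ∈ G₀} D_e δ_e` is a maximal commutative subring of `R ⋊_α G`: it is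
commutative and coincides with its centralizer. -/
def IsMaxCommDiag : Prop :=
  (∀ a ∈ P.diag, ∀ b ∈ P.diag, P.skewMul a b = P.skewMul b a) ∧
    ∀ b ∈ P.carrier, (∀ a ∈ P.diag, P.skewMul a b = P.skewMul b a) → b ∈ P.diag

/-- The partial action has the intersection property: every nonzero ideal of
`R ⋊_α G` intersects `⊕_{e ∈ G₀} D_e δ_e` nontrivially. -/
def HasIntersectionProperty : Prop :=
  ∀ I : Set (G →₀ R), P.IsSkewIdeal I → I ≠ {0} → I ∩ P.diag ≠ {0}

/-- `R` is `G`-simple: the only `G`-invariant ideals of `R` are `{0}` and `R`. -/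
def GSimple : Prop := ∀ J : Set R, P.IsInvIdeal J → J = {0} ∨ J = Set.univ

/-- `R` is `G`-prime: if `I, J` are `G`-invariant ideals with `IJ = {0}`, then
`I = {0}` or `J = {0}`. -/
def GPrime : Prop :=
  ∀ I J : Set R, P.IsInvIdeal I → P.IsInvIdeal J →
    (∀ x ∈ I, ∀ y ∈ J, x * y = 0) → I = {0} ∨ J = {0}

/-- `R ⋊_α G` is graded simple. -/
def GradedSimple : Prop :=
  ∀ I : Set (G →₀ R), P.IsGradedIdeal I → I = {0} ∨ I = P.carrier

/-- `R ⋊_α G` is graded prime. -/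
def GradedPrime : Prop :=
  ∀ I J : Set (G →₀ R), P.IsGradedIdeal I → P.IsGradedIdeal J →
    (∀ x ∈ I, ∀ y ∈ J, P.skewMul x y = 0) → I = {0} ∨ J = {0}

/-- `R ⋊_α G` is a prime ring. -/
def SkewPrime : Prop :=
  ∀ I J : Set (G →₀ R), P.IsSkewIdeal I → P.IsSkewIdeal J →
    (∀ x ∈ I, ∀ y ∈ J, P.skewMul x y = 0) → I = {0} ∨ J = {0}

/-- `R ⋊_α G` is a simple ring. -/
def SkewSimple : Prop :=
  ∀ I : Set (G →₀ R), P.IsSkewIdeal I → I = {0} ∨ I = P.carrier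

end PartialAction

section AuxGroupoid

variable {G : Type*} (𝔾 : DGroupoid G)

theorem DGroupoid.mul_congr {g g' h h' : G} (hg : g = g') (hh : h = h')
    (p : 𝔾.s g = 𝔾.r h) (p' : 𝔾.s g' = 𝔾.r h') : 𝔾.mul g h p = 𝔾.mul g' h' p' := by
  subst hg; subst hh; rfl

theorem DGroupoid.unit_s {e : G} (h : 𝔾.unit e) : 𝔾.s e = e := by
  have hs := 𝔾.s_of_r e
  rwa [h] at hs

theorem DGroupoid.unit_inv {e : G} (h : 𝔾.unit e) : 𝔾.inv e = e := by
  have hre : 𝔾.r (𝔾.inv e) = e := by rw [𝔾.r_inv, 𝔾.unit_s h]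
  have p1 : 𝔾.s (𝔾.r (𝔾.inv e)) = 𝔾.r (𝔾.inv e) := 𝔾.s_of_r _
  have p2 : 𝔾.s e = 𝔾.r (𝔾.inv e) := by rw [hre, 𝔾.unit_s h]
  have h1 : 𝔾.mul (𝔾.r (𝔾.inv e)) (𝔾.inv e) p1 = 𝔾.inv e := 𝔾.id_mul _ p1
  have h2 : 𝔾.mul e (𝔾.inv e) p2 = 𝔾.r e := 𝔾.mul_inv e p2
  rw [𝔾.mul_congr hre rfl p1 p2] at h1
  rw [h1, h] at h2
  exact h2

end AuxGroupoid

namespace PartialAction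

variable {G R : Type*} [NonUnitalRing R] {𝔾 : DGroupoid G} (P : PartialAction 𝔾 R)

theorem act_zero (g : G) : P.act g 0 = 0 := by
  have h := P.act_add g 0 (P.zero_mem _) 0 (P.zero_mem _)
  rw [add_zero] at h
  exact (left_eq_add.mp h)

theorem sub_mem' (g : G) {x y : R} (hx : x ∈ P.D g) (hy : y ∈ P.D g) : x - y ∈ P.D g := by
  rw [sub_eq_add_neg]
  exact P.add_mem g x hx _ (P.neg_mem g y hy)

theorem mul_mem_D (hsu : ∀ g, IsSUnitalSet (P.D g)) (g : G) {x : R} (hx : x ∈ P.D g) (y : R) :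
    x * y ∈ P.D g ∧ y * x ∈ P.D g := by
  obtain ⟨⟨u, hu, hxu⟩, ⟨v, hv, hvx⟩⟩ := hsu g x hx
  have hxr : x ∈ P.D (𝔾.r g) := P.subset_r g hx
  have h1 : x * y ∈ P.D (𝔾.r g) := ((P.idealR g).2.2.2 x hxr y).1
  have h2 : y * x ∈ P.D (𝔾.r g) := ((P.idealR g).2.2.2 x hxr y).2
  constructor
  · have h3 : v * (x * y) ∈ P.D g := (P.idealInR g v hv _ h1).1
    rwa [← mul_assoc, hvx] at h3
  · have h3 : (y * x) * u ∈ P.D g := (P.idealInR g u hu _ h2).2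
    rwa [mul_assoc, hxu] at h3

theorem mem_act_inv (g : G) {x : R} (hx : x ∈ P.D g) :
    P.act (𝔾.inv g) x ∈ P.D (𝔾.inv g) :=
  P.act_mem (𝔾.inv g) x (by rw [𝔾.inv_inv]; exact hx)

theorem act_inv' (g : G) {x : R} (hx : x ∈ P.D g) : P.act g (P.act (𝔾.inv g) x) = x := by
  have h := P.act_inv (𝔾.inv g) x (by rw [𝔾.inv_inv]; exact hx)
  rwa [𝔾.inv_inv] at h

theorem single_mem_carrier (g : G) {c : R} (hc : c ∈ P.D g) :
    Finsupp.single g c ∈ P.carrier := by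
  intro k
  rw [Finsupp.single_apply]
  split
  · rename_i h; exact h ▸ hc
  · exact P.zero_mem k

theorem term_mem (hsu : ∀ g, IsSUnitalSet (P.D g)) (g h : G) (p : 𝔾.s g = 𝔾.r h) {a b : R}
    (ha : a ∈ P.D g) (hb : b ∈ P.D h) :
    P.act g (P.act (𝔾.inv g) a * b) ∈ P.D (𝔾.mul g h p) := by
  have ha'm : P.act (𝔾.inv g) a ∈ P.D (𝔾.inv g) := P.mem_act_inv g ha
  have hx1 : P.act (𝔾.inv g) a * b ∈ P.D (𝔾.inv g) := (P.mul_mem_D hsu (𝔾.inv g) ha'm b).1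
  have hx2 : P.act (𝔾.inv g) a * b ∈ P.D h := (P.mul_mem_D hsu h hb (P.act (𝔾.inv g) a)).2
  have hy : P.act (𝔾.inv h) (P.act (𝔾.inv g) a * b) ∈ P.D (𝔾.inv (𝔾.mul g h p)) :=
    P.act_comp_mem g h p _ hx1 hx2
  have hyD : P.act (𝔾.inv h) (P.act (𝔾.inv g) a * b) ∈ P.D (𝔾.inv h) := P.mem_act_inv h hx2
  have hhx : P.act h (P.act (𝔾.inv h) (P.act (𝔾.inv g) a * b)) = P.act (𝔾.inv g) a * b :=
    P.act_inv' h hx2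
  have hc : P.act g (P.act h (P.act (𝔾.inv h) (P.act (𝔾.inv g) a * b))) =
      P.act (𝔾.mul g h p) (P.act (𝔾.inv h) (P.act (𝔾.inv g) a * b)) :=
    P.act_comp g h p _ hyD (by rw [hhx]; exact hx1)
  rw [hhx] at hc
  rw [hc]
  exact P.act_mem _ _ hy

theorem term_mem_J (hsu : ∀ g, IsSUnitalSet (P.D g)) {J : Set R} (hJ : P.IsInvIdeal J)
    (g h : G) {a b : R} (ha : a ∈ P.D g) (hb : b ∈ P.D h) (hab : a ∈ J ∨ b ∈ J) :
    P.act g (P.act (𝔾.inv g) a * b) ∈ J := by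
  have ha'm : P.act (𝔾.inv g) a ∈ P.D (𝔾.inv g) := P.mem_act_inv g ha
  have hx1 : P.act (𝔾.inv g) a * b ∈ P.D (𝔾.inv g) := (P.mul_mem_D hsu (𝔾.inv g) ha'm b).1
  have hxJ : P.act (𝔾.inv g) a * b ∈ J := by
    rcases hab with hA | hB
    · exact (hJ.1.2.2.2 _ (hJ.2 (𝔾.inv g) a ⟨by rw [𝔾.inv_inv]; exact ha, hA⟩) b).1
    · exact (hJ.1.2.2.2 _ hB _).2
  exact hJ.2 g _ ⟨hx1, hxJ⟩

theorem skewMul_apply_mem {K : G → Set R} (hK0 : ∀ k, (0 : R) ∈ K k)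
    (hKadd : ∀ k, ∀ x ∈ K k, ∀ y ∈ K k, x + y ∈ K k) (a b : G →₀ R)
    (hterm : ∀ g h (p : 𝔾.s g = 𝔾.r h),
      P.act g (P.act (𝔾.inv g) (a g) * b h) ∈ K (𝔾.mul g h p))
    (k : G) : P.skewMul a b k ∈ K k := by
  rw [skewMul, Finsupp.finset_sum_apply]
  refine Finset.sum_induction _ (· ∈ K k) (fun x y hx hy => hKadd k x hx y hy) (hK0 k) ?_
  intro g _
  rw [Finsupp.finset_sum_apply]
  refine Finset.sum_induction _ (· ∈ K k) (fun x y hx hy => hKadd k x hx y hy) (hK0 k) ?_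
  intro h _
  split
  · rename_i p
    rw [Finsupp.single_apply]
    split
    · rename_i hk; exact hk ▸ hterm g h p
    · exact hK0 k
  · rw [Finsupp.zero_apply]; exact hK0 k

theorem skewMul_single_single (g h : G) (u v : R) :
    P.skewMul (Finsupp.single g u) (Finsupp.single h v) =
      if p : 𝔾.s g = 𝔾.r h then
        Finsupp.single (𝔾.mul g h p) (P.act g (P.act (𝔾.inv g) u * v)) else 0 := by
  by_cases hu : u = 0
  · subst hu
    rw [skewMul]
    simp [P.act_zero]
  by_cases hv : v = 0
  · subst hv
    rw [skewMul]
    simp [P.act_zero]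
  rw [skewMul, Finsupp.support_single_ne_zero _ hu, Finsupp.support_single_ne_zero _ hv,
    Finset.sum_singleton, Finset.sum_singleton]
  simp only [Finsupp.single_eq_same]

theorem P0_single (g : G) (x : R) : P.P0 (Finsupp.single g x) = if 𝔾.unit g then x else 0 := by
  rw [P0]
  exact Finsupp.sum_single_index (by split <;> rfl)

theorem P0_zero : P.P0 (0 : G →₀ R) = 0 := Finsupp.sum_zero_index

theorem P0_add (a b : G →₀ R) : P.P0 (a + b) = P.P0 a + P.P0 b := by
  rw [P0, P0, P0]
  exact Finsupp.sum_add_index' (fun g => by split <;> rfl) (fun g x y => by split <;> simp)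

theorem P0_neg (a : G →₀ R) : P.P0 (-a) = - P.P0 a := by
  have h := P.P0_add a (-a)
  rw [add_neg_cancel, P0_zero] at h
  exact eq_neg_of_add_eq_zero_right h.symm

theorem P0_mem {K : Set R} (h0 : (0 : R) ∈ K) (hadd : ∀ x ∈ K, ∀ y ∈ K, x + y ∈ K)
    (a : G →₀ R) (ha : ∀ g, a g ∈ K) : P.P0 a ∈ K := by
  rw [P0, Finsupp.sum]
  refine Finset.sum_induction _ (· ∈ K) (fun x y hx hy => hadd x hx y hy) h0 ?_
  intro g _
  split
  · exact ha g
  · exact h0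

theorem eq_zero_of_mem_inter (hds : P.directSum) {e e' : G} (he : 𝔾.unit e) (he' : 𝔾.unit e')
    (hne : e ≠ e') {x : R} (hx : x ∈ P.D e) (hx' : x ∈ P.D e') : x = 0 := by
  set d : G →₀ R := Finsupp.single e x - Finsupp.single e' x with hd
  have h1 : ∀ g ∈ d.support, 𝔾.unit g := by
    intro g hg
    have hg2 := Finsupp.support_sub hg
    rcases Finset.mem_union.mp hg2 with h | h
    · have := Finsupp.support_single_subset h
      rw [Finset.mem_singleton.mp this]; exact he
    · have := Finsupp.support_single_subset h
      rw [Finset.mem_singleton.mp this]; exact he'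
  have h2 : ∀ g, d g ∈ P.D g := by
    intro g
    rw [hd, Finsupp.sub_apply, Finsupp.single_apply, Finsupp.single_apply]
    by_cases h : e = g
    · rw [if_pos h, if_neg (fun h' : e' = g => hne (h.trans h'.symm)), sub_zero]
      exact h ▸ hx
    · rw [if_neg h]
      by_cases h' : e' = g
      · rw [if_pos h', zero_sub]; exact P.neg_mem _ _ (h' ▸ hx')
      · rw [if_neg h', sub_zero]; exact P.zero_mem g
  have h3 : d.sum (fun _ v => v) = 0 := by
    rw [hd, Finsupp.sum_sub_index (fun _ _ _ => rfl),
      Finsupp.sum_single_index rfl, Finsupp.sum_single_index rfl, sub_self]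
  have h4 := hds.2 d h1 h2 h3
  have h5 := congrArg (fun f : G →₀ R => f e) h4
  simp only [hd, Finsupp.sub_apply, Finsupp.zero_apply, Finsupp.single_eq_same,
    Finsupp.single_eq_of_ne' (Ne.symm hne), sub_zero] at h5
  exact h5

theorem exists_decomp_inJ (hds : P.directSum) (hsu : ∀ g, IsSUnitalSet (P.D g)) {J : Set R}
    (hJ : IsRingIdeal J) {x : R} (hx : x ∈ J) :
    ∃ f : G →₀ R, (∀ g ∈ f.support, 𝔾.unit g) ∧ (∀ g, f g ∈ P.D g ∧ f g ∈ J) ∧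
      (f.sum fun _ v => v) = x := by
  obtain ⟨f, hfu, hfD, hfs⟩ := hds.1 x
  refine ⟨f, hfu, fun g => ⟨hfD g, ?_⟩, hfs⟩
  by_cases hg : f g = 0
  · rw [hg]; exact hJ.1
  have hgs : g ∈ f.support := Finsupp.mem_support_iff.mpr hg
  have hgu : 𝔾.unit g := hfu g hgs
  obtain ⟨⟨u, hu, hfgu⟩, -⟩ := hsu g (f g) (hfD g)
  have hsum : (∑ g' ∈ f.support, f g' * u) = f g * u :=
    Finset.sum_eq_single g
      (fun g' hg' hne => P.eq_zero_of_mem_inter hds (hfu g' hg') hgu hne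
        ((P.mul_mem_D hsu g' (hfD g') u).1) ((P.mul_mem_D hsu g hu (f g')).2))
      (fun h => absurd hgs h)
  have key : x * u = f g := by
    rw [← hfs, Finsupp.sum, Finset.sum_mul, hsum, hfgu]
  rw [← key]
  exact (hJ.2.2.2 x hx u).1

theorem apply_eq_of_P0 (hds : P.directSum) {b : G →₀ R} (hb : ∀ g, b g ∈ P.D g)
    {e₀ : G} (he₀ : 𝔾.unit e₀) {x : R} (hx : x ∈ P.D e₀) (hP0 : P.P0 b = x) :
    b e₀ = x := by
  have hfsum : ((b.filter (fun g => 𝔾.unit g)).sum fun _ v => v) = P.P0 b := by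
    rw [Finsupp.sum, Finsupp.support_filter, Finset.sum_filter, P0, Finsupp.sum]
    refine Finset.sum_congr rfl fun g _ => ?_
    split
    · rename_i h; rw [Finsupp.filter_apply_pos _ _ h]
    · rfl
  set d : G →₀ R := b.filter (fun g => 𝔾.unit g) - Finsupp.single e₀ x with hd
  have h1 : ∀ g ∈ d.support, 𝔾.unit g := by
    intro g hg
    have hg2 := Finsupp.support_sub hg
    rcases Finset.mem_union.mp hg2 with h | h
    · rw [Finsupp.support_filter] at h
      exact (Finset.mem_filter.mp h).2
    · have := Finsupp.support_single_subset h
      rw [Finset.mem_singleton.mp this]; exact he₀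
  have h2 : ∀ g, d g ∈ P.D g := by
    intro g
    rw [hd, Finsupp.sub_apply, Finsupp.filter_apply, Finsupp.single_apply]
    by_cases h : 𝔾.unit g
    · rw [if_pos h]
      by_cases h' : e₀ = g
      · rw [if_pos h']; exact P.sub_mem' g (hb g) (h' ▸ hx)
      · rw [if_neg h', sub_zero]; exact hb g
    · rw [if_neg h, if_neg (fun h' : e₀ = g => h (h' ▸ he₀)), sub_zero]
      exact P.zero_mem g
  have h3 : d.sum (fun _ v => v) = 0 := by
    rw [hd, Finsupp.sum_sub_index (fun _ _ _ => rfl), hfsum, hP0,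
      Finsupp.sum_single_index rfl, sub_self]
  have h4 := hds.2 d h1 h2 h3
  have h5 := congrArg (fun f : G →₀ R => f e₀) h4
  simp only [hd, Finsupp.sub_apply, Finsupp.zero_apply, Finsupp.single_eq_same] at h5
  rw [Finsupp.filter_apply_pos _ _ he₀] at h5
  exact sub_eq_zero.mp h5

end PartialAction

/-- The map `Ψ : J ↦ J ⋊_{α^J} G` is a bijection from the set of
`G`-invariant ideals of `R` onto the set of `G`-graded ideals of `R ⋊_α G`, with
inverse `I ↦ P₀(I)`. -/
theorem invIdeal_gradedIdeal_correspondence {G R : Type*} [NonUnitalRing R]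
    (𝔾 : DGroupoid G) (P : PartialAction 𝔾 R)
    (hsu : ∀ g, IsSUnitalSet (P.D g)) (hds : P.directSum) :
    (∀ J : Set R, P.IsInvIdeal J → P.IsGradedIdeal (P.skewOf J)) ∧
    (∀ I : Set (G →₀ R), P.IsGradedIdeal I → P.IsInvIdeal (P.P0 '' I)) ∧
    (∀ J : Set R, P.IsInvIdeal J → P.P0 '' (P.skewOf J) = J) ∧
    (∀ I : Set (G →₀ R), P.IsGradedIdeal I → P.skewOf (P.P0 '' I) = I) := by
  have hsingle_carrier : ∀ (g : G) (c : R), c ∈ P.D g → Finsupp.single g c ∈ P.carrier :=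
    fun g c hc => P.single_mem_carrier g hc
  -- Part 1
  have part1 : ∀ J : Set R, P.IsInvIdeal J → P.IsGradedIdeal (P.skewOf J) := by
    intro J hJ
    have hJid := hJ.1
    have hK0 : ∀ k, (0 : R) ∈ P.D k ∩ J := fun k => ⟨P.zero_mem k, hJid.1⟩
    have hKadd : ∀ k, ∀ x ∈ P.D k ∩ J, ∀ y ∈ P.D k ∩ J, x + y ∈ P.D k ∩ J :=
      fun k x hx y hy => ⟨P.add_mem k x hx.1 y hy.1, hJid.2.1 x hx.2 y hy.2⟩
    constructor
    · refine ⟨fun a ha g => (ha g).1, fun g => ?_, ?_, ?_, ?_⟩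
      · rw [Finsupp.zero_apply]; exact hK0 g
      · intro x hx y hy g
        rw [Finsupp.add_apply]; exact hKadd g _ (hx g) _ (hy g)
      · intro x hx g
        rw [Finsupp.neg_apply]
        exact ⟨P.neg_mem g _ (hx g).1, hJid.2.2.1 _ (hx g).2⟩
      · intro x hx y hy
        constructor
        · intro k
          exact P.skewMul_apply_mem hK0 hKadd x y
            (fun g h p => ⟨P.term_mem hsu g h p (hx g).1 (hy h),
              P.term_mem_J hsu hJ g h (hx g).1 (hy h) (Or.inl (hx g).2)⟩) k
        · intro k
          exact P.skewMul_apply_mem hK0 hKadd y x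
            (fun g h p => ⟨P.term_mem hsu g h p (hy g) (hx h).1,
              P.term_mem_J hsu hJ g h (hy g) (hx h).1 (Or.inr (hx h).2)⟩) k
    · intro a ha g k
      rw [Finsupp.single_apply]
      split
      · rename_i h; exact h ▸ ha g
      · exact hK0 k
  refine ⟨part1, ?_, ?_, ?_⟩
  -- Part 2
  · intro I hI
    obtain ⟨⟨hIc, hI0, hIadd, hIneg, hImul⟩, hIgr⟩ := hI
    have hJ0 : (0 : R) ∈ P.P0 '' I := ⟨0, hI0, P.P0_zero⟩
    have hJadd : ∀ x ∈ P.P0 '' I, ∀ y ∈ P.P0 '' I, x + y ∈ P.P0 '' I := by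
      rintro _ ⟨a, ha, rfl⟩ _ ⟨b, hb, rfl⟩
      exact ⟨a + b, hIadd a ha b hb, P.P0_add a b⟩
    have hJneg : ∀ x ∈ P.P0 '' I, -x ∈ P.P0 '' I := by
      rintro _ ⟨a, ha, rfl⟩
      exact ⟨-a, hIneg a ha, P.P0_neg a⟩
    have hkey : ∀ e e' c c', 𝔾.unit e → 𝔾.unit e' → c ∈ P.D e → c' ∈ P.D e' →
        (Finsupp.single e c ∈ I ∨ Finsupp.single e' c' ∈ I) → c * c' ∈ P.P0 '' I := by
      intro e e' c c' he he' hc hc' hin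
      by_cases hee : e = e'
      · subst hee
        have hz : P.skewMul (Finsupp.single e c) (Finsupp.single e c') ∈ I := by
          rcases hin with h | h
          · exact (hImul _ h _ (hsingle_carrier e c' hc')).1
          · exact (hImul _ h _ (hsingle_carrier e c hc)).2
        have p : 𝔾.s e = 𝔾.r e := by rw [𝔾.unit_s he, he]
        have hcomp : P.skewMul (Finsupp.single e c) (Finsupp.single e c') =
            Finsupp.single e (c * c') := by
          rw [P.skewMul_single_single, dif_pos p]
          have hmul : 𝔾.mul e e p = e := by
            have p1 : 𝔾.s (𝔾.r e) = 𝔾.r e := 𝔾.s_of_r e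
            exact (𝔾.mul_congr he rfl p1 p).symm.trans (𝔾.id_mul e p1)
          rw [hmul, 𝔾.unit_inv he, P.act_unit e he c hc,
            P.act_unit e he _ (P.mul_mem_D hsu e hc c').1]
        refine ⟨Finsupp.single e (c * c'), hcomp ▸ hz, ?_⟩
        rw [P.P0_single]; exact if_pos he
      · have hz : c * c' = 0 := P.eq_zero_of_mem_inter hds he he' hee
          ((P.mul_mem_D hsu e hc c').1) ((P.mul_mem_D hsu e' hc' c).2)
        rw [hz]; exact hJ0
    have hJmul : ∀ x ∈ P.P0 '' I, ∀ y : R, x * y ∈ P.P0 '' I ∧ y * x ∈ P.P0 '' I := by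
      rintro _ ⟨a, ha, rfl⟩ y
      obtain ⟨f, hfu, hfD, hfs⟩ := hds.1 y
      constructor
      · have hexp : P.P0 a * y =
            ∑ g ∈ a.support, ∑ h ∈ f.support, (if 𝔾.unit g then a g else 0) * f h := by
          rw [PartialAction.P0, Finsupp.sum, Finset.sum_mul]
          refine Finset.sum_congr rfl fun g _ => ?_
          rw [← hfs, Finsupp.sum, Finset.mul_sum]
        rw [hexp]
        refine Finset.sum_induction _ (· ∈ P.P0 '' I)
          (fun x y hx hy => hJadd x hx y hy) hJ0 ?_
        intro g _
        refine Finset.sum_induction _ (· ∈ P.P0 '' I)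
          (fun x y hx hy => hJadd x hx y hy) hJ0 ?_
        intro h hh
        by_cases hu : 𝔾.unit g
        · rw [if_pos hu]
          exact hkey g h (a g) (f h) hu (hfu h hh) (hIc ha g) (hfD h)
            (Or.inl (hIgr a ha g))
        · rw [if_neg hu, zero_mul]; exact hJ0
      · have hexp : y * P.P0 a =
            ∑ h ∈ f.support, ∑ g ∈ a.support, f h * (if 𝔾.unit g then a g else 0) := by
          rw [← hfs, Finsupp.sum, Finset.sum_mul]
          refine Finset.sum_congr rfl fun h _ => ?_
          rw [PartialAction.P0, Finsupp.sum, Finset.mul_sum]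
        rw [hexp]
        refine Finset.sum_induction _ (· ∈ P.P0 '' I)
          (fun x y hx hy => hJadd x hx y hy) hJ0 ?_
        intro h hh
        refine Finset.sum_induction _ (· ∈ P.P0 '' I)
          (fun x y hx hy => hJadd x hx y hy) hJ0 ?_
        intro g _
        by_cases hu : 𝔾.unit g
        · rw [if_pos hu]
          exact hkey h g (f h) (a g) (hfu h hh) hu (hfD h) (hIc ha g)
            (Or.inr (hIgr a ha g))
        · rw [if_neg hu, mul_zero]; exact hJ0
    refine ⟨⟨hJ0, hJadd, hJneg, hJmul⟩, ?_⟩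
    rintro g x ⟨hxD, hxJ⟩
    obtain ⟨b, hb, hP0b⟩ := hxJ
    have hxsg : x ∈ P.D (𝔾.s g) := by
      have h := P.subset_r (𝔾.inv g) hxD
      rwa [𝔾.r_inv] at h
    have hbsg : b (𝔾.s g) = x := P.apply_eq_of_P0 hds (hIc hb) (𝔾.r_of_s g) hxsg hP0b
    have hsingle : Finsupp.single (𝔾.s g) x ∈ I := hbsg ▸ hIgr b hb (𝔾.s g)
    obtain ⟨⟨v, hv, hxv⟩, ⟨u', hu', hu'x⟩⟩ := hsu (𝔾.inv g) x hxD
    have huD : P.act g u' ∈ P.D g := P.act_mem g u' hu'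
    have hA : P.skewMul (Finsupp.single g (P.act g u')) (Finsupp.single (𝔾.s g) x) ∈ I :=
      (hImul _ hsingle _ (hsingle_carrier g _ huD)).2
    have p1 : 𝔾.s g = 𝔾.r (𝔾.s g) := (𝔾.r_of_s g).symm
    have hAeq : P.skewMul (Finsupp.single g (P.act g u')) (Finsupp.single (𝔾.s g) x) =
        Finsupp.single g (P.act g x) := by
      rw [P.skewMul_single_single, dif_pos p1, 𝔾.mul_id g p1, P.act_inv g u' hu', hu'x]
    rw [hAeq] at hA
    have hB := (hImul _ hA _ (hsingle_carrier (𝔾.inv g) v hv)).1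
    have p2 : 𝔾.s g = 𝔾.r (𝔾.inv g) := (𝔾.r_inv g).symm
    have hBeq : P.skewMul (Finsupp.single g (P.act g x)) (Finsupp.single (𝔾.inv g) v) =
        Finsupp.single (𝔾.r g) (P.act g x) := by
      rw [P.skewMul_single_single, dif_pos p2, 𝔾.mul_inv g p2, P.act_inv g x hxD, hxv]
    rw [hBeq] at hB
    exact ⟨_, hB, by rw [P.P0_single]; exact if_pos (𝔾.r_idem g)⟩
  -- Part 3
  · intro J hJ
    ext x
    constructor
    · rintro ⟨a, ha, rfl⟩
      exact P.P0_mem hJ.1.1 hJ.1.2.1 a (fun g => (ha g).2)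
    · intro hx
      obtain ⟨f, hfu, hfDJ, hfs⟩ := P.exists_decomp_inJ hds hsu hJ.1 hx
      refine ⟨f, fun g => ⟨(hfDJ g).1, (hfDJ g).2⟩, ?_⟩
      rw [PartialAction.P0, ← hfs, Finsupp.sum, Finsupp.sum]
      exact Finset.sum_congr rfl fun g hg => if_pos (hfu g hg)
  -- Part 4
  · intro I hI
    obtain ⟨⟨hIc, hI0, hIadd, hIneg, hImul⟩, hIgr⟩ := hI
    ext a
    constructor
    · intro ha
      have hsingle : ∀ g, ∀ c : R, c ∈ P.D g → c ∈ P.P0 '' I → Finsupp.single g c ∈ I := by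
        intro g c hcD hcJ
        obtain ⟨b, hb, hP0b⟩ := hcJ
        have hcrg : c ∈ P.D (𝔾.r g) := P.subset_r g hcD
        have hbrg : b (𝔾.r g) = c := P.apply_eq_of_P0 hds (hIc hb) (𝔾.r_idem g) hcrg hP0b
        have h1 : Finsupp.single (𝔾.r g) c ∈ I := hbrg ▸ hIgr b hb (𝔾.r g)
        obtain ⟨⟨u, hu, hcu⟩, -⟩ := hsu g c hcD
        have p : 𝔾.s (𝔾.r g) = 𝔾.r g := 𝔾.s_of_r g
        have hurg : 𝔾.unit (𝔾.r g) := 𝔾.r_idem g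
        have heq : P.skewMul (Finsupp.single (𝔾.r g) c) (Finsupp.single g u) =
            Finsupp.single g c := by
          rw [P.skewMul_single_single, dif_pos p, 𝔾.id_mul g p, 𝔾.unit_inv hurg,
            P.act_unit _ hurg c hcrg,
            P.act_unit _ hurg _ (P.mul_mem_D hsu (𝔾.r g) hcrg u).1, hcu]
        have h2 := (hImul _ h1 _ (hsingle_carrier g u hu)).1
        rwa [heq] at h2
      rw [← Finsupp.sum_single a, Finsupp.sum]
      refine Finset.sum_induction _ (· ∈ I) (fun x y hx hy => hIadd x hx y hy) hI0 ?_
      intro g _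
      exact hsingle g (a g) (ha g).1 (ha g).2
    · intro ha g
      refine ⟨hIc ha g, ?_⟩
      have h1 : Finsupp.single g (a g) ∈ I := hIgr a ha g
      have hcD : a g ∈ P.D g := hIc ha g
      have hc' : P.act (𝔾.inv g) (a g) ∈ P.D (𝔾.inv g) := P.mem_act_inv g hcD
      obtain ⟨⟨v, hv, hcv⟩, -⟩ := hsu (𝔾.inv g) _ hc'
      have p : 𝔾.s g = 𝔾.r (𝔾.inv g) := (𝔾.r_inv g).symm
      have heq : P.skewMul (Finsupp.single g (a g)) (Finsupp.single (𝔾.inv g) v) =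
          Finsupp.single (𝔾.r g) (a g) := by
        rw [P.skewMul_single_single, dif_pos p, 𝔾.mul_inv g p, hcv, P.act_inv' g hcD]
      have h2 := (hImul _ h1 _ (hsingle_carrier (𝔾.inv g) v hv)).1
      rw [heq] at h2
      exact ⟨_, h2, by rw [P.P0_single]; exact if_pos (𝔾.r_idem g)⟩
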